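/- Let E be a real Banach space, let k > 0, t ∈ ℝ, and let u : ℝ → E be four times continuously differentiable on [t−k, t+k]. Then ‖(u(t+k) − 2u(t) + u(t−k))/k² − u''(t)‖² ≤ (k³/126) ∫_{t−k}^{t+k} ‖u''''(s)‖² ds. -/

import Mathlib

open Set intervalIntegral MeasureTheory

lemma taylor4_integral_remainder
    {E : Type*} [NormedAddCommGroup E] [NormedSpace ℝ E] [CompleteSpace E]
    (a b c : ℝ) (hab : a ≤ b) (u u' u'' u''' u'''' : ℝ → E)
    (h1 : ∀ s ∈ Icc a b, HasDerivWithinAt u (u' s) (Icc a b) s)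
    (h2 : ∀ s ∈ Icc a b, HasDerivWithinAt u' (u'' s) (Icc a b) s)
    (h3 : ∀ s ∈ Icc a b, HasDerivWithinAt u'' (u''' s) (Icc a b) s)
    (h4 : ∀ s ∈ Icc a b, HasDerivWithinAt u''' (u'''' s) (Icc a b) s)
    (hc : ContinuousOn u'''' (Icc a b)) :
    (u b + (c - b) • u' b + ((c - b) ^ 2 / 2) • u'' b + ((c - b) ^ 3 / 6) • u''' b)
      - (u a + (c - a) • u' a + ((c - a) ^ 2 / 2) • u'' a + ((c - a) ^ 3 / 6) • u''' a)
      = ∫ s in a..b, ((c - s) ^ 3 / 6) • u'''' s := by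
  set F : ℝ → E := fun s => u s + (c - s) • u' s + ((c - s) ^ 2 / 2) • u'' s
      + ((c - s) ^ 3 / 6) • u''' s with hF
  have hFd : ∀ s ∈ Icc a b, HasDerivWithinAt F (((c - s) ^ 3 / 6) • u'''' s) (Icc a b) s := by
    intro s hs
    have d1 : HasDerivWithinAt (fun y : ℝ => c - y) (-1) (Icc a b) s :=
      ((hasDerivAt_id s).const_sub c).hasDerivWithinAt
    have d2 : HasDerivWithinAt (fun y : ℝ => (c - y) ^ 2 / 2)
        (-(c - s)) (Icc a b) s := by
      have := (d1.pow 2).div_const 2; exact this.congr_deriv (by norm_num <;> ring)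
    have d3 : HasDerivWithinAt (fun y : ℝ => (c - y) ^ 3 / 6)
        (-((c - s) ^ 2 / 2)) (Icc a b) s := by
      have := (d1.pow 3).div_const 6; exact this.congr_deriv (by norm_num <;> ring)
    have := (((h1 s hs).add (d1.smul (h2 s hs))).add
        (d2.smul (h3 s hs))).add (d3.smul (h4 s hs))
    convert this using 1
    · rfl
    module
  have hFcont : ContinuousOn F (Icc a b) := fun s hs => (hFd s hs).continuousWithinAt
  have hint : IntervalIntegrable (fun s => ((c - s) ^ 3 / 6) • u'''' s) volume a b := by
    apply ContinuousOn.intervalIntegrable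
    rw [uIcc_of_le hab]
    exact (Continuous.continuousOn (by continuity)).smul hc
  have := intervalIntegral.integral_eq_sub_of_hasDeriv_right_of_le hab hFcont
    (fun s hs => ((hFd s (Ioo_subset_Icc_self hs)).hasDerivAt
      (Icc_mem_nhds hs.1 hs.2)).hasDerivWithinAt) hint
  rw [this]
lemma interval_cauchy_schwarz {a b : ℝ} (hab : a ≤ b) {f g : ℝ → ℝ}
    (hf : ContinuousOn f (Icc a b)) (hg : ContinuousOn g (Icc a b))
    (hf0 : ∀ x ∈ Icc a b, 0 ≤ f x) (hg0 : ∀ x ∈ Icc a b, 0 ≤ g x) :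
    (∫ s in a..b, f s * g s) ^ 2
      ≤ (∫ s in a..b, f s ^ 2) * (∫ s in a..b, g s ^ 2) := by
  set μ := volume.restrict (Ioc a b) with hμ
  have hmf : AEStronglyMeasurable f μ :=
    (hf.mono Ioc_subset_Icc_self).aestronglyMeasurable measurableSet_Ioc
  have hmg : AEStronglyMeasurable g μ :=
    (hg.mono Ioc_subset_Icc_self).aestronglyMeasurable measurableSet_Ioc
  have hif : Integrable (fun x => f x ^ 2) μ := by
    have : IntegrableOn (fun x => f x ^ 2) (Icc a b) := (hf.pow 2).integrableOn_Icc
    exact this.mono_set Ioc_subset_Icc_self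
  have hig : Integrable (fun x => g x ^ 2) μ := by
    have : IntegrableOn (fun x => g x ^ 2) (Icc a b) := (hg.pow 2).integrableOn_Icc
    exact this.mono_set Ioc_subset_Icc_self
  have hf2 : MemLp f 2 μ := (memLp_two_iff_integrable_sq hmf).2 hif
  have hg2 : MemLp g 2 μ := (memLp_two_iff_integrable_sq hmg).2 hig
  have hfae : 0 ≤ᵐ[μ] f := (ae_restrict_iff' measurableSet_Ioc).2
    (Filter.Eventually.of_forall fun x hx => hf0 x (Ioc_subset_Icc_self hx))
  have hgae : 0 ≤ᵐ[μ] g := (ae_restrict_iff' measurableSet_Ioc).2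
    (Filter.Eventually.of_forall fun x hx => hg0 x (Ioc_subset_Icc_self hx))
  have h2 : ENNReal.ofReal (2 : ℝ) = 2 := by norm_num
  have key := integral_mul_le_Lp_mul_Lq_of_nonneg
    ((Real.holderConjugate_iff_eq_conjExponent (by norm_num)).2 (by norm_num))
    hfae hgae (h2 ▸ hf2) (h2 ▸ hg2)
  have hrpow : ∀ x : ℝ, x ^ (2:ℝ) = x ^ 2 := fun x => by
    rw [show (2:ℝ) = ((2:ℕ):ℝ) by norm_num, Real.rpow_natCast]
  simp only [hrpow] at key
  rw [intervalIntegral.integral_of_le hab, intervalIntegral.integral_of_le hab,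
    intervalIntegral.integral_of_le hab]
  have hA : 0 ≤ ∫ x, f x ^ 2 ∂μ := integral_nonneg fun x => sq_nonneg _
  have hB : 0 ≤ ∫ x, g x ^ 2 ∂μ := integral_nonneg fun x => sq_nonneg _
  have h0 : 0 ≤ ∫ x, f x * g x ∂μ := by
    apply MeasureTheory.integral_nonneg_of_ae
    filter_upwards [hfae, hgae] with x hx hy using mul_nonneg hx hy
  calc (∫ x, f x * g x ∂μ) ^ 2
      ≤ ((∫ x, f x ^ 2 ∂μ) ^ (1/2 : ℝ) * (∫ x, g x ^ 2 ∂μ) ^ (1/2 : ℝ)) ^ 2 :=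
        pow_le_pow_left₀ h0 key 2
    _ = (∫ x, f x ^ 2 ∂μ) * (∫ x, g x ^ 2 ∂μ) := by
        rw [mul_pow, ← Real.rpow_natCast ((∫ x, f x ^ 2 ∂μ) ^ (1/2:ℝ)) 2,
          ← Real.rpow_natCast ((∫ x, g x ^ 2 ∂μ) ^ (1/2:ℝ)) 2,
          ← Real.rpow_mul hA, ← Real.rpow_mul hB]
        norm_num


lemma ker_right (a b : ℝ) :
    (∫ s in a..b, ((b - s) ^ 3 / 6) ^ 2) = (b - a) ^ 7 / 252 := by
  have hd : ∀ x ∈ uIcc a b, HasDerivAt (fun s => -(b - s) ^ 7 / 252)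
      (((b - x) ^ 3 / 6) ^ 2) x := by
    intro x _
    have d1 : HasDerivAt (fun s : ℝ => b - s) (-1) x := (hasDerivAt_id x).const_sub b
    have := ((d1.pow 7).neg).div_const 252
    exact this.congr_deriv (by norm_num <;> ring)
  have hi : IntervalIntegrable (fun s => ((b - s) ^ 3 / 6) ^ 2) volume a b :=
    Continuous.intervalIntegrable (by continuity) a b
  rw [intervalIntegral.integral_eq_sub_of_hasDerivAt hd hi]
  ring

lemma ker_left (a b : ℝ) :
    (∫ s in a..b, ((s - a) ^ 3 / 6) ^ 2) = (b - a) ^ 7 / 252 := by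
  have hd : ∀ x ∈ uIcc a b, HasDerivAt (fun s => (s - a) ^ 7 / 252)
      (((x - a) ^ 3 / 6) ^ 2) x := by
    intro x _
    have d1 : HasDerivAt (fun s : ℝ => s - a) 1 x := (hasDerivAt_id x).sub_const a
    have := (d1.pow 7).div_const 252
    exact this.congr_deriv (by norm_num <;> ring)
  have hi : IntervalIntegrable (fun s => ((s - a) ^ 3 / 6) ^ 2) volume a b :=
    Continuous.intervalIntegrable (by continuity) a b
  rw [intervalIntegral.integral_eq_sub_of_hasDerivAt hd hi]
  ring

/-- Bound on the truncation error `τⁿ` of the second-order central difference quotient. -/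
theorem truncation_error_central_difference_bound
    {E : Type*} [NormedAddCommGroup E] [NormedSpace ℝ E] [CompleteSpace E]
    (k t : ℝ) (hk : 0 < k) (u u' u'' u''' u'''' : ℝ → E)
    (hu' : ∀ s ∈ Set.Icc (t - k) (t + k),
      HasDerivWithinAt u (u' s) (Set.Icc (t - k) (t + k)) s)
    (hu'' : ∀ s ∈ Set.Icc (t - k) (t + k),
      HasDerivWithinAt u' (u'' s) (Set.Icc (t - k) (t + k)) s)
    (hu''' : ∀ s ∈ Set.Icc (t - k) (t + k),
      HasDerivWithinAt u'' (u''' s) (Set.Icc (t - k) (t + k)) s)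
    (hu'''' : ∀ s ∈ Set.Icc (t - k) (t + k),
      HasDerivWithinAt u''' (u'''' s) (Set.Icc (t - k) (t + k)) s)
    (hcont : ContinuousOn u'''' (Set.Icc (t - k) (t + k))) :
    ‖(k ^ 2)⁻¹ • (u (t + k) - (2 : ℝ) • u t + u (t - k)) - u'' t‖ ^ 2
      ≤ (k ^ 3 / 126) * ∫ s in (t - k)..(t + k), ‖u'''' s‖ ^ 2 := by
  have h1 : t - k ≤ t := by linarith
  have h2 : t ≤ t + k := by linarith
  have hsubR : Icc t (t + k) ⊆ Icc (t - k) (t + k) := Icc_subset_Icc (by linarith) le_rfl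
  have hsubL : Icc (t - k) t ⊆ Icc (t - k) (t + k) := Icc_subset_Icc le_rfl (by linarith)
  -- Taylor expansions
  have hp := taylor4_integral_remainder t (t + k) (t + k) h2 u u' u'' u''' u''''
    (fun s hs => (hu' s (hsubR hs)).mono hsubR) (fun s hs => (hu'' s (hsubR hs)).mono hsubR)
    (fun s hs => (hu''' s (hsubR hs)).mono hsubR) (fun s hs => (hu'''' s (hsubR hs)).mono hsubR)
    (hcont.mono hsubR)
  have hm := taylor4_integral_remainder (t - k) t (t - k) h1 u u' u'' u''' u''''
    (fun s hs => (hu' s (hsubL hs)).mono hsubL) (fun s hs => (hu'' s (hsubL hs)).mono hsubL)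
    (fun s hs => (hu''' s (hsubL hs)).mono hsubL) (fun s hs => (hu'''' s (hsubL hs)).mono hsubL)
    (hcont.mono hsubL)
  set Rp := ∫ s in t..(t + k), (((t + k) - s) ^ 3 / 6) • u'''' s with hRp
  set Rm := ∫ s in (t - k)..t, (((t - k) - s) ^ 3 / 6) • u'''' s with hRm
  have hsum : u (t + k) - (2 : ℝ) • u t + u (t - k) - (k ^ 2 : ℝ) • u'' t = Rp - Rm := by
    rw [← hp, ← hm]
    have e1 : (t + k - (t + k)) = (0:ℝ) := by ring
    have e2 : (t + k - t) = k := by ring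
    have e3 : (t - k - t) = -k := by ring
    have e4 : (t - k - (t - k)) = (0:ℝ) := by ring
    rw [e1, e2, e3, e4]
    module
  have hk2 : (k ^ 2 : ℝ) ≠ 0 := pow_ne_zero 2 hk.ne'
  have hD : (k ^ 2 : ℝ)⁻¹ • (u (t + k) - (2 : ℝ) • u t + u (t - k)) - u'' t
      = (k ^ 2 : ℝ)⁻¹ • (Rp - Rm) := by
    rw [← hsum, smul_sub, smul_smul, inv_mul_cancel₀ hk2, one_smul]
  -- Cauchy–Schwarz bounds for each remainder
  have hcR : ContinuousOn (fun s => ‖u'''' s‖) (Icc t (t + k)) := (hcont.mono hsubR).norm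
  have hcL : ContinuousOn (fun s => ‖u'''' s‖) (Icc (t - k) t) := (hcont.mono hsubL).norm
  have np : ‖Rp‖ ≤ ∫ s in t..(t + k), |((t + k) - s) ^ 3 / 6| * ‖u'''' s‖ := by
    refine (intervalIntegral.norm_integral_le_integral_norm h2).trans_eq ?_
    simp only [norm_smul, Real.norm_eq_abs]
  have nm : ‖Rm‖ ≤ ∫ s in (t - k)..t, |((t - k) - s) ^ 3 / 6| * ‖u'''' s‖ := by
    refine (intervalIntegral.norm_integral_le_integral_norm h1).trans_eq ?_
    simp only [norm_smul, Real.norm_eq_abs]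
  have cP : Continuous (fun s : ℝ => |((t + k) - s) ^ 3 / 6|) :=
    ((((continuous_const.sub continuous_id).pow 3).div_const 6).abs)
  have cM : Continuous (fun s : ℝ => |((t - k) - s) ^ 3 / 6|) :=
    ((((continuous_const.sub continuous_id).pow 3).div_const 6).abs)
  have csP := interval_cauchy_schwarz h2 (f := fun s => |((t + k) - s) ^ 3 / 6|)
    (g := fun s => ‖u'''' s‖) cP.continuousOn hcR
    (fun x _ => abs_nonneg _) (fun x _ => norm_nonneg _)
  have csM := interval_cauchy_schwarz h1 (f := fun s => |((t - k) - s) ^ 3 / 6|)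
    (g := fun s => ‖u'''' s‖) cM.continuousOn hcL
    (fun x _ => abs_nonneg _) (fun x _ => norm_nonneg _)
  have kerP : (∫ s in t..(t + k), |((t + k) - s) ^ 3 / 6| ^ 2) = k ^ 7 / 252 := by
    have : (∫ s in t..(t + k), |((t + k) - s) ^ 3 / 6| ^ 2)
        = ∫ s in t..(t + k), (((t + k) - s) ^ 3 / 6) ^ 2 := by
      apply intervalIntegral.integral_congr
      intro x _; exact sq_abs _
    rw [this, ker_right]; ring
  have kerM : (∫ s in (t - k)..t, |((t - k) - s) ^ 3 / 6| ^ 2) = k ^ 7 / 252 := by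
    have : (∫ s in (t - k)..t, |((t - k) - s) ^ 3 / 6| ^ 2)
        = ∫ s in (t - k)..t, ((s - (t - k)) ^ 3 / 6) ^ 2 := by
      apply intervalIntegral.integral_congr
      intro x _; simp only [sq_abs]; ring
    rw [this, ker_left]; ring
  set Bp := ∫ s in t..(t + k), ‖u'''' s‖ ^ 2 with hBp
  set Bm := ∫ s in (t - k)..t, ‖u'''' s‖ ^ 2 with hBm
  have hp2 : ‖Rp‖ ^ 2 ≤ k ^ 7 / 252 * Bp := by
    calc ‖Rp‖ ^ 2 ≤ (∫ s in t..(t + k), |((t + k) - s) ^ 3 / 6| * ‖u'''' s‖) ^ 2 :=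
          pow_le_pow_left₀ (norm_nonneg _) np 2
      _ ≤ _ := by rw [← kerP]; exact csP
  have hm2 : ‖Rm‖ ^ 2 ≤ k ^ 7 / 252 * Bm := by
    calc ‖Rm‖ ^ 2 ≤ (∫ s in (t - k)..t, |((t - k) - s) ^ 3 / 6| * ‖u'''' s‖) ^ 2 :=
          pow_le_pow_left₀ (norm_nonneg _) nm 2
      _ ≤ _ := by rw [← kerM]; exact csM
  -- combine the two halves of the integral
  have hiL : IntervalIntegrable (fun s => ‖u'''' s‖ ^ 2) volume (t - k) t := by
    apply ContinuousOn.intervalIntegrable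
    rw [uIcc_of_le h1]; exact hcL.pow 2
  have hiR : IntervalIntegrable (fun s => ‖u'''' s‖ ^ 2) volume t (t + k) := by
    apply ContinuousOn.intervalIntegrable
    rw [uIcc_of_le h2]; exact hcR.pow 2
  have hT : Bm + Bp = ∫ s in (t - k)..(t + k), ‖u'''' s‖ ^ 2 :=
    intervalIntegral.integral_add_adjacent_intervals hiL hiR
  have hBp0 : 0 ≤ Bp := intervalIntegral.integral_nonneg h2 fun x _ => sq_nonneg _
  have hBm0 : 0 ≤ Bm := intervalIntegral.integral_nonneg h1 fun x _ => sq_nonneg _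
  -- final computation
  rw [hD, ← hT]
  have hnorm : ‖(k ^ 2 : ℝ)⁻¹ • (Rp - Rm)‖ ≤ (k ^ 2)⁻¹ * (‖Rp‖ + ‖Rm‖) := by
    rw [norm_smul, Real.norm_eq_abs, abs_of_pos (by positivity)]
    exact mul_le_mul_of_nonneg_left (norm_sub_le _ _) (by positivity)
  calc ‖(k ^ 2 : ℝ)⁻¹ • (Rp - Rm)‖ ^ 2
      ≤ ((k ^ 2)⁻¹ * (‖Rp‖ + ‖Rm‖)) ^ 2 := pow_le_pow_left₀ (norm_nonneg _) hnorm 2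
    _ = (k ^ 2)⁻¹ ^ 2 * (‖Rp‖ + ‖Rm‖) ^ 2 := by ring
    _ ≤ (k ^ 2)⁻¹ ^ 2 * (2 * (‖Rp‖ ^ 2 + ‖Rm‖ ^ 2)) := by
        have : (‖Rp‖ + ‖Rm‖) ^ 2 ≤ 2 * (‖Rp‖ ^ 2 + ‖Rm‖ ^ 2) := by nlinarith [sq_nonneg (‖Rp‖ - ‖Rm‖)]
        exact mul_le_mul_of_nonneg_left this (by positivity)
    _ ≤ (k ^ 2)⁻¹ ^ 2 * (2 * (k ^ 7 / 252 * Bp + k ^ 7 / 252 * Bm)) := by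
        have : ‖Rp‖ ^ 2 + ‖Rm‖ ^ 2 ≤ k ^ 7 / 252 * Bp + k ^ 7 / 252 * Bm := add_le_add hp2 hm2
        exact mul_le_mul_of_nonneg_left (by linarith) (by positivity)
    _ = k ^ 3 / 126 * (Bm + Bp) := by field_simp; ring
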